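/- Let d ≥ 2, let λ ≥ 1, and let W : Fin d → Fin d → ℝ be a channel with strictly positive entries, each row a probability vector, satisfying the λ-ratio bound W y x ≤ λ · W y x' for all inputs x, x' and outputs y (i.e., W is ε₀-locally differentially private with λ = e^{ε₀}). Then for every pair of inputs a ≠ b, the chi-square divergence χ²(W(·|b) ‖ W(·|a)) = ∑_y (W(y|b) − W(y|a))² / W(y|a) satisfies χ²(W(·|b) ‖ W(·|a)) ≤ (λ − 1)²/λ. Moreover, when λ > 1, equality holds if and only if the likelihood ratio w(y) = W(y|b)/W(y|a) takes only the two values λ^{-1} and λ, with ∑_{y : w(y) = λ^{-1}} W(y|a) = λ/(1+λ) and ∑_{y : w(y) = λ} W(y|a) = 1/(1+λ). -/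

import Mathlib

open Finset BigOperators
open scoped Classical

/-- **Universal extremal chi-square bound** (Theorem 4.2).  For an `ε₀`-LDP channel with
`λ = e^{ε₀}` (entrywise ratio bound `W(y|x) ≤ λ W(y|x')`), every pairwise chi-square
divergence is at most `(λ−1)²/λ`, and for `λ > 1` equality holds iff the likelihood ratio
takes only the two endpoint values `λ⁻¹` and `λ`, with respective null masses
`λ/(1+λ)` and `1/(1+λ)`. -/
theorem universal_chi_square_bound (d : ℕ) (hd : 2 ≤ d) (lam : ℝ) (hlam : 1 ≤ lam)
    (W : Fin d → Fin d → ℝ)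
    (hpos : ∀ x y, 0 < W x y)
    (hrow : ∀ x, ∑ y, W x y = 1)
    (hldp : ∀ x x' y, W x y ≤ lam * W x' y) :
    ∀ a b : Fin d, a ≠ b →
      (∑ y, (W b y - W a y) ^ 2 / W a y ≤ (lam - 1) ^ 2 / lam)
      ∧ (1 < lam →
          ((∑ y, (W b y - W a y) ^ 2 / W a y = (lam - 1) ^ 2 / lam) ↔
            ((∀ y, W b y / W a y = lam⁻¹ ∨ W b y / W a y = lam)
              ∧ ∑ y ∈ Finset.univ.filter (fun y => W b y / W a y = lam⁻¹), W a y
                  = lam / (1 + lam)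
              ∧ ∑ y ∈ Finset.univ.filter (fun y => W b y / W a y = lam), W a y
                  = 1 / (1 + lam)))) := by
  intro a b hab
  have hlam0 : (0:ℝ) < lam := lt_of_lt_of_le one_pos hlam
  have hlamne : lam ≠ 0 := ne_of_gt hlam0
  have hppos : ∀ y, 0 < W a y := fun y => hpos a y
  have hpne : ∀ y, W a y ≠ 0 := fun y => (hppos y).ne'
  have hpsum : ∑ y, W a y = 1 := hrow a
  have hqsum : ∑ y, W b y = 1 := hrow b
  have hub : ∀ y, W b y ≤ lam * W a y := fun y => hldp b a y
  have hlb : ∀ y, lam⁻¹ * W a y ≤ W b y := by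
    intro y
    rw [inv_mul_le_iff₀ hlam0]
    exact hldp a b y
  set f : Fin d → ℝ :=
    fun y => (lam * W a y - W b y) * (W b y - lam⁻¹ * W a y) / W a y with hf
  have hfnn : ∀ y ∈ Finset.univ, (0:ℝ) ≤ f y := by
    intro y _
    apply div_nonneg
    · exact mul_nonneg (by linarith [hub y]) (by linarith [hlb y])
    · exact (hppos y).le
  have hfeq : ∀ y, (W b y - W a y) ^ 2 / W a y = (lam + lam⁻¹ - 2) * W b y - f y := by
    intro y
    have h := hpne y
    simp only [hf]
    field_simp [hf]
    ring
  have hsum : ∑ y, (W b y - W a y) ^ 2 / W a y = (lam - 1) ^ 2 / lam - ∑ y, f y := by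
    rw [Finset.sum_congr rfl (fun y _ => hfeq y), Finset.sum_sub_distrib,
      ← Finset.mul_sum, hqsum]
    have : (lam + lam⁻¹ - 2) * 1 = (lam - 1) ^ 2 / lam := by
      field_simp; ring
    rw [this]
  have hfsum_nonneg : 0 ≤ ∑ y, f y := Finset.sum_nonneg hfnn
  constructor
  · rw [hsum]; linarith
  · intro hlam1
    have h1pl : (1:ℝ) + lam ≠ 0 := by positivity
    have hinvne : lam⁻¹ ≠ lam := by
      intro h
      have : lam⁻¹ < 1 := inv_lt_one_of_one_lt₀ hlam1
      rw [h] at this; linarith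
    -- complementarity of the two filters, under the two-value hypothesis
    have hfilter : ∀ (htwo : ∀ y, W b y / W a y = lam⁻¹ ∨ W b y / W a y = lam),
        Finset.univ.filter (fun y => ¬ (W b y / W a y = lam⁻¹))
          = Finset.univ.filter (fun y => W b y / W a y = lam) := by
      intro htwo
      apply Finset.filter_congr
      intro y _
      constructor
      · intro h; rcases htwo y with h' | h'
        · exact absurd h' h
        · exact h'
      · intro h h'
        rw [h'] at h; exact hinvne h
    -- from two-value hypothesis, masses are determined
    have hmass : ∀ (htwo : ∀ y, W b y / W a y = lam⁻¹ ∨ W b y / W a y = lam),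
        (∑ y ∈ Finset.univ.filter (fun y => W b y / W a y = lam⁻¹), W a y
            = lam / (1 + lam))
        ∧ (∑ y ∈ Finset.univ.filter (fun y => W b y / W a y = lam), W a y
            = 1 / (1 + lam)) := by
      intro htwo
      set s := ∑ y ∈ Finset.univ.filter (fun y => W b y / W a y = lam⁻¹), W a y with hs
      set t := ∑ y ∈ Finset.univ.filter (fun y => W b y / W a y = lam), W a y with ht
      have hsum1 : s + t = 1 := by
        rw [hs, ht, ← hfilter htwo,
          Finset.sum_filter_add_sum_filter_not Finset.univ
            (fun y => W b y / W a y = lam⁻¹) (fun y => W a y)]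
        exact hpsum
      have hqA : ∑ y ∈ Finset.univ.filter (fun y => W b y / W a y = lam⁻¹), W b y
          = lam⁻¹ * s := by
        rw [hs, Finset.mul_sum]
        apply Finset.sum_congr rfl
        intro y hy
        have h := (Finset.mem_filter.mp hy).2
        rw [div_eq_iff (hpne y)] at h
        exact h
      have hqB : ∑ y ∈ Finset.univ.filter (fun y => W b y / W a y = lam), W b y
          = lam * t := by
        rw [ht, Finset.mul_sum]
        apply Finset.sum_congr rfl
        intro y hy
        have h := (Finset.mem_filter.mp hy).2
        rw [div_eq_iff (hpne y)] at h
        exact h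
      have hsum2 : lam⁻¹ * s + lam * t = 1 := by
        rw [← hqA, ← hqB, ← hfilter htwo,
          Finset.sum_filter_add_sum_filter_not Finset.univ
            (fun y => W b y / W a y = lam⁻¹) (fun y => W b y)]
        exact hqsum
      have hlamm1 : lam - 1 ≠ 0 := by intro h; nlinarith
      have ht' : t = 1 / (1 + lam) := by
        field_simp at hsum2
        field_simp
        have key : (lam - 1) * (t * (1 + lam) - 1) = 0 := by
          linear_combination hsum2 - hsum1
        have := (mul_eq_zero.mp key).resolve_left hlamm1
        linarith
      have hs' : s = lam / (1 + lam) := by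
        rw [ht'] at hsum1
        field_simp at hsum1 ⊢
        linarith
      exact ⟨hs', ht'⟩
    constructor
    · intro heq
      have hfzero : ∑ y, f y = 0 := by rw [hsum] at heq; linarith
      have hf0 : ∀ y, f y = 0 := fun y =>
        (Finset.sum_eq_zero_iff_of_nonneg hfnn).mp hfzero y (Finset.mem_univ y)
      have htwo : ∀ y, W b y / W a y = lam⁻¹ ∨ W b y / W a y = lam := by
        intro y
        have h := hf0 y
        rw [hf, div_eq_zero_iff] at h
        rcases h with h | h
        · rcases mul_eq_zero.mp h with h | h
          · right
            rw [div_eq_iff (hpne y)]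
            linarith
          · left
            rw [div_eq_iff (hpne y)]
            linarith
        · exact absurd h (hpne y)
      exact ⟨htwo, (hmass htwo).1, (hmass htwo).2⟩
    · rintro ⟨htwo, hsA, hsB⟩
      rw [hsum]
      have hA : ∑ y ∈ Finset.univ.filter (fun y => W b y / W a y = lam⁻¹), f y = 0 := by
        apply Finset.sum_eq_zero
        intro y hy
        have h := (Finset.mem_filter.mp hy).2
        rw [div_eq_iff (hpne y)] at h
        rw [hf]
        simp only [h]
        ring
      have hB : ∑ y ∈ Finset.univ.filter (fun y => W b y / W a y = lam), f y = 0 := by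
        apply Finset.sum_eq_zero
        intro y hy
        have h := (Finset.mem_filter.mp hy).2
        rw [div_eq_iff (hpne y)] at h
        rw [hf]
        simp only [h]
        ring
      have : ∑ y, f y = 0 := by
        rw [← Finset.sum_filter_add_sum_filter_not Finset.univ
          (fun y => W b y / W a y = lam⁻¹) f, hfilter htwo, hA, hB, add_zero]
      rw [this, sub_zero]
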